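/- (Fluid age formula.) Let ϑ ∈ I, let ζ be the unique fluid model solution with initial measure ϑ, let w be the unique workload fluid model solution with w(0) = w_ϑ, define τ(t) = inf{s ∈ [0,t] : w(s) + s ≥ t}, and for 0 ≤ u ≤ t let H(t,u) = [0, max(w(t−u)−u, 0)] × [0,∞). Then for each 1 ≤ k ≤ K: if 0 ≤ u ≤ t < w(0), then ζ_k(t)(H(t,u)) = ϑ_k(H(t,u)_t) + λ_k ∫_u^t G_k(v) dv; and if t ≥ w(0) and 0 ≤ u ≤ t, then ζ_k(t)(H(t,u)) = λ_k ∫_u^{w(τ(t))} G_k(v) dv when u < w(τ(t)), and ζ_k(t)(H(t,u)) = 0 when w(τ(t)) ≤ u ≤ t. -/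

import Mathlib

open MeasureTheory Set Filter Topology
open scoped ENNReal

noncomputable section

namespace OverloadedFIFO

/-- The complement `G(x) = Γ((x, ∞))` of the cumulative distribution function of `Γ`. -/
def Gk (Γ : MeasureTheory.Measure ℝ) (x : ℝ) : ℝ := (Γ (Set.Ioi x)).toReal

/-- Model data: `K` job classes with arrival rates `lam`, service rates `mu`, and
deadline (patience) distributions `Γ`, in the overloaded regime `ρ > 1`.  Each `Γ k` is a
Borel probability measure on `[0,∞)` (no mass on negatives), with continuous c.d.f.
(no atoms, in particular `Γ k {0} = 0`) and finite mean. -/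
structure Data (K : ℕ) where
  lam : Fin K → ℝ
  mu : Fin K → ℝ
  Γ : Fin K → MeasureTheory.Measure ℝ
  lam_pos : ∀ k, 0 < lam k
  mu_pos : ∀ k, 0 < mu k
  Γ_prob : ∀ k, MeasureTheory.IsProbabilityMeasure (Γ k)
  Γ_null_neg : ∀ k, Γ k (Set.Iio 0) = 0
  Γ_noAtom : ∀ k, ∀ x : ℝ, Γ k {x} = 0
  Γ_finite_mean : ∀ k, MeasureTheory.Integrable id (Γ k)
  rho_gt_one : 1 < ∑ k, lam k / mu k

instance {K : ℕ} (D : Data K) (k : Fin K) : IsProbabilityMeasure (D.Γ k) := D.Γ_prob k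

/-- `ρ_k = λ_k / μ_k`. -/
def Data.rho {K : ℕ} (D : Data K) (k : Fin K) : ℝ := D.lam k / D.mu k

/-- `ρ = Σ_k ρ_k`. -/
def Data.rhoTot {K : ℕ} (D : Data K) : ℝ := ∑ k, D.rho k

/-- A workload fluid model solution: a nonnegative function `w` on `[0,∞)` satisfying
`w(t) = w(0) + Σ_k ρ_k ∫_0^t G_k(w(s)) ds − t` for all `t ≥ 0`. -/
def IsWorkloadSol {K : ℕ} (D : Data K) (w : ℝ → ℝ) : Prop :=
  (∀ t : ℝ, 0 ≤ t → 0 ≤ w t) ∧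
  (∀ k : Fin K, ∀ t : ℝ, 0 ≤ t →
    IntervalIntegrable (fun s => Gk (D.Γ k) (w s)) volume 0 t) ∧
  (∀ t : ℝ, 0 ≤ t →
    w t = w 0 + (∑ k, D.rho k * ∫ s in (0:ℝ)..t, Gk (D.Γ k) (w s)) - t)

/-- `w_l = sup {u ≥ 0 : Σ_k ρ_k G_k(u) > 1}`. -/
def wl {K : ℕ} (D : Data K) : ℝ :=
  sSup {u : ℝ | 0 ≤ u ∧ 1 < ∑ k, D.rho k * Gk (D.Γ k) u}

/-- `w_u = sup {u ≥ 0 : Σ_k ρ_k G_k(u) ≥ 1}`. -/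
def wu {K : ℕ} (D : Data K) : ℝ :=
  sSup {u : ℝ | 0 ≤ u ∧ 1 ≤ ∑ k, D.rho k * Gk (D.Γ k) u}

/-- `d_max = max_k sup {x ≥ 0 : G_k(x) > 0} ∈ (0,∞]`, as an extended nonnegative real. -/
def dmax {K : ℕ} (D : Data K) : ℝ≥0∞ :=
  ⨆ k, sSup (ENNReal.ofReal '' {x : ℝ | 0 ≤ x ∧ 0 < Gk (D.Γ k) x})

/-- `τ(t) = inf {s ∈ [0,t] : w(s) + s ≥ t}`. -/
def tauF (w : ℝ → ℝ) (t : ℝ) : ℝ := sInf {s : ℝ | 0 ≤ s ∧ s ≤ t ∧ t ≤ w s + s}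

/-- The nonnegative quadrant `[0,∞)²`. -/
def Q : Set (ℝ × ℝ) := {p | 0 ≤ p.1 ∧ 0 ≤ p.2}

/-- The shift `B_x = {y ∈ [0,∞)² : y − x ∈ B}` of a set `B ⊆ [0,∞)²`. -/
def shift (B : Set (ℝ × ℝ)) (x : ℝ × ℝ) : Set (ℝ × ℝ) :=
  {y | y ∈ Q ∧ (y.1 - x.1, y.2 - x.2) ∈ B}

/-- Diagonal shift `B_t = B_{(t,t)}`. -/
def shiftd (B : Set (ℝ × ℝ)) (t : ℝ) : Set (ℝ × ℝ) := shift B (t, t)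

/-- The set `C = ([0,∞)×{0}) ∪ ({0}×[0,∞))`. -/
def Cset : Set (ℝ × ℝ) := {p | (0 ≤ p.1 ∧ p.2 = 0) ∨ (p.1 = 0 ∧ 0 ≤ p.2)}

/-- The `κ`-enlargement `B^κ = {x ∈ [0,∞)² : inf_{y ∈ B} ‖x−y‖ < κ}` (Euclidean norm). -/
def enlarge (B : Set (ℝ × ℝ)) (κ : ℝ) : Set (ℝ × ℝ) :=
  {x | x ∈ Q ∧ ∃ y ∈ B, Real.sqrt ((x.1 - y.1) ^ 2 + (x.2 - y.2) ^ 2) < κ}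

/-- `w_ϑ = sup {x ≥ 0 : ϑ_+([x,∞)×[0,∞)) > 0}` for a `K`-tuple `ϑ` of measures on `[0,∞)²`. -/
def wMeas {K : ℕ} (ϑ : Fin K → MeasureTheory.Measure (ℝ × ℝ)) : ℝ :=
  sSup {x : ℝ | 0 ≤ x ∧ 0 < ∑ k, ϑ k (Set.Ici x ×ˢ Set.Ici (0:ℝ))}

/-- Membership in the set `I` of admissible initial measures: each `ϑ k` is a finite Borel
measure on `[0,∞)²`; (I.1) the superposition charges no corner set `C_x`, `x ∈ [0,∞)²`;
(I.2) `w_ϑ < ∞`; (I.3) `max_k G_k(w_ϑ − ε) > 0` for every `ε > 0`. -/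
def MemI {K : ℕ} (D : Data K) (ϑ : Fin K → MeasureTheory.Measure (ℝ × ℝ)) : Prop :=
  (∀ k, IsFiniteMeasure (ϑ k)) ∧
  (∀ k, ϑ k Qᶜ = 0) ∧
  (∀ x ∈ Q, (∑ k, ϑ k (shift Cset x)) = 0) ∧
  BddAbove {x : ℝ | 0 ≤ x ∧ 0 < ∑ k, ϑ k (Set.Ici x ×ˢ Set.Ici (0:ℝ))} ∧
  (∀ ε : ℝ, 0 < ε → ∃ k, 0 < Gk (D.Γ k) (wMeas ϑ - ε))

/-- `δ⁺_w`: the Dirac measure at `w` if `w > 0`, and the zero measure otherwise. -/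
def deltaPlus (w : ℝ) : MeasureTheory.Measure ℝ :=
  if 0 < w then MeasureTheory.Measure.dirac w else 0

instance (w : ℝ) : SFinite (deltaPlus w) := by
  unfold deltaPlus; split_ifs <;> infer_instance

/-- `(δ⁺_w × Γ)(B)`, as a real number. -/
def kern (Γ : MeasureTheory.Measure ℝ) (w : ℝ) (B : Set (ℝ × ℝ)) : ℝ :=
  (((deltaPlus w).prod Γ) B).toReal

/-- A (measure-valued) fluid model solution with initial measure `ϑ`: a family
`ζ(t) = (ζ_1(t),…,ζ_K(t))` of finite Borel measures on `[0,∞)²` with `ζ(0) = ϑ` satisfying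
`ζ_k(t)(B) = ϑ_k(B_t) + λ_k ∫_0^t (δ⁺_{w(s)} × Γ_k)(B_{t−s}) ds` for every Borel
`B ⊆ [0,∞)²` and `t ≥ 0`, where `w` is the (unique) workload fluid model solution with
`w(0) = w_ϑ`. -/
def IsFluidSol {K : ℕ} (D : Data K) (ϑ : Fin K → MeasureTheory.Measure (ℝ × ℝ))
    (ζ : ℝ → Fin K → MeasureTheory.Measure (ℝ × ℝ)) : Prop :=
  ∃ w : ℝ → ℝ, IsWorkloadSol D w ∧ w 0 = wMeas ϑ ∧
    (∀ t : ℝ, 0 ≤ t → ∀ k, IsFiniteMeasure (ζ t k) ∧ ζ t k Qᶜ = 0) ∧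
    (∀ k, ζ 0 k = ϑ k) ∧
    (∀ k, ∀ B : Set (ℝ × ℝ), B ⊆ Q → MeasurableSet B → ∀ t : ℝ, 0 ≤ t →
      IntervalIntegrable (fun s => kern (D.Γ k) (w s) (shiftd B (t - s))) volume 0 t ∧
      ζ t k B = ϑ k (shiftd B t) +
        ENNReal.ofReal (D.lam k * ∫ s in (0:ℝ)..t, kern (D.Γ k) (w s) (shiftd B (t - s))))

/-- The candidate invariant state `θ^w`:
`θ^w_k(B) = λ_k ∫_0^w Γ_k({p ≥ u : (w−u, p−u) ∈ B}) du`. -/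
def thetaW {K : ℕ} (D : Data K) (w : ℝ) (k : Fin K) : MeasureTheory.Measure (ℝ × ℝ) :=
  ENNReal.ofReal (D.lam k) •
    MeasureTheory.Measure.map (fun up : ℝ × ℝ => (w - up.1, up.2 - up.1))
      ((((MeasureTheory.volume.restrict (Set.Ioo (0:ℝ) w))).prod (D.Γ k)).restrict
        {up : ℝ × ℝ | up.1 ≤ up.2})
/-! ### Auxiliary lemmas -/

section GkBasics

variable {Γ : MeasureTheory.Measure ℝ}

lemma Gk_nonneg (x : ℝ) : 0 ≤ Gk Γ x := ENNReal.toReal_nonneg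

lemma Gk_le_one [IsProbabilityMeasure Γ] (x : ℝ) : Gk Γ x ≤ 1 := by
  have : Γ (Set.Ioi x) ≤ 1 := prob_le_one
  simpa [Gk] using ENNReal.toReal_mono ENNReal.one_ne_top this

lemma Gk_antitone [IsFiniteMeasure Γ] : Antitone (Gk Γ) := by
  intro a b hab
  exact ENNReal.toReal_mono (measure_ne_top _ _) (measure_mono (Set.Ioi_subset_Ioi hab))

lemma Gk_Ici [IsFiniteMeasure Γ] (hΓ : ∀ x : ℝ, Γ {x} = 0) (x : ℝ) :
    (Γ (Set.Ici x)).toReal = Gk Γ x := by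
  have : Γ (Set.Ici x) = Γ (Set.Ioi x) := by
    have : Set.Ici x = Set.Ioi x ∪ {x} := by
      ext y; simp [le_iff_lt_or_eq, or_comm, eq_comm]
    rw [this]
    refine le_antisymm (le_trans (measure_union_le _ _) (by simp [hΓ x])) (measure_mono Set.subset_union_left)
  rw [Gk, this]

lemma Gk_continuous [IsFiniteMeasure Γ] (hΓ : ∀ x : ℝ, Γ {x} = 0) :
    Continuous (Gk Γ) := by
  rw [Metric.continuous_iff]
  intro x ε hε
  -- the measures of the shrinking annuli tend to `Γ {x} = 0`
  have hinter : (⋂ n : ℕ, Set.Ioc (x - (n+1:ℝ)⁻¹) (x + (n+1:ℝ)⁻¹)) = {x} := by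
    ext y
    simp only [Set.mem_iInter, Set.mem_Ioc, Set.mem_singleton_iff]
    constructor
    · intro h
      have h1 : ∀ n : ℕ, |y - x| ≤ (n+1:ℝ)⁻¹ := by
        intro n
        rw [abs_le]
        constructor <;> linarith [(h n).1, (h n).2]
      have : |y - x| ≤ 0 := by
        refine le_of_forall_pos_le_add fun δ hδ => ?_
        obtain ⟨n, hn⟩ := exists_nat_one_div_lt hδ
        have := h1 n
        rw [one_div] at hn
        linarith
      have : y - x = 0 := by
        have := abs_nonneg (y - x); have := abs_eq_zero.mp (le_antisymm ‹|y-x| ≤ 0› this)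
        exact this
      linarith
    · rintro rfl
      refine fun n => ⟨by nlinarith [inv_pos.mpr (show (0:ℝ) < n+1 by positivity)],
        by nlinarith [inv_pos.mpr (show (0:ℝ) < n+1 by positivity)]⟩
  have hanti : Antitone fun n : ℕ => Set.Ioc (x - (n+1:ℝ)⁻¹) (x + (n+1:ℝ)⁻¹) := by
    intro a b hab
    have : (b+1:ℝ)⁻¹ ≤ (a+1:ℝ)⁻¹ := by
      apply inv_anti₀ (by positivity) (by have := (Nat.cast_le (α := ℝ)).mpr hab; linarith)
    exact Set.Ioc_subset_Ioc (by linarith) (by linarith)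
  have htend := tendsto_measure_iInter_atTop
    (μ := Γ) (fun n => (measurableSet_Ioc).nullMeasurableSet) hanti
    ⟨0, measure_ne_top _ _⟩
  rw [hinter, hΓ x] at htend
  have hev : ∀ᶠ n : ℕ in atTop, Γ (Set.Ioc (x - (n+1:ℝ)⁻¹) (x + (n+1:ℝ)⁻¹)) < ENNReal.ofReal ε := by
    exact htend.eventually_lt_const (by simpa using hε)
  obtain ⟨n, hn⟩ := hev.exists
  refine ⟨(n+1:ℝ)⁻¹, by positivity, fun y hy => ?_⟩
  set δ : ℝ := (n+1:ℝ)⁻¹ with hδdef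
  have hy' : |y - x| < δ := by simpa [Real.dist_eq] using hy
  have hb1 : Gk Γ (x + δ) ≤ Gk Γ y := Gk_antitone (by cases abs_lt.mp hy'; linarith)
  have hb2 : Gk Γ y ≤ Gk Γ (x - δ) := Gk_antitone (by cases abs_lt.mp hy'; linarith)
  have hb3 : Gk Γ (x + δ) ≤ Gk Γ x := Gk_antitone (by nlinarith [inv_pos.mpr (show (0:ℝ) < n+1 by positivity)])
  have hb4 : Gk Γ x ≤ Gk Γ (x - δ) := Gk_antitone (by nlinarith [inv_pos.mpr (show (0:ℝ) < n+1 by positivity)])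
  have hsplit : Γ (Set.Ioi (x - δ)) = Γ (Set.Ioc (x-δ) (x+δ)) + Γ (Set.Ioi (x + δ)) := by
    rw [← measure_union _ measurableSet_Ioi]
    · rw [Set.Ioc_union_Ioi_eq_Ioi (by linarith [inv_pos.mpr (show (0:ℝ) < n+1 by positivity)])]
    · exact Set.Ioc_disjoint_Ioi le_rfl
  have hdiff : Gk Γ (x - δ) - Gk Γ (x + δ) < ε := by
    have : Gk Γ (x - δ) = (Γ (Set.Ioc (x-δ) (x+δ))).toReal + Gk Γ (x + δ) := by
      rw [Gk, hsplit, ENNReal.toReal_add (measure_ne_top _ _) (measure_ne_top _ _)]; rfl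
    rw [this]
    have := ENNReal.toReal_lt_of_lt_ofReal hn
    linarith
  rw [Real.dist_eq, abs_lt]
  constructor <;> linarith

end GkBasics
section Workload

variable {K : ℕ} {D : Data K}

/-- Total drift function `F(x) = Σ_k ρ_k G_k(x)`. -/
def Ftot (D : Data K) (x : ℝ) : ℝ := ∑ k, D.rho k * Gk (D.Γ k) x

lemma rho_pos (D : Data K) (k : Fin K) : 0 < D.rho k := div_pos (D.lam_pos k) (D.mu_pos k)

lemma Ftot_nonneg (D : Data K) (x : ℝ) : 0 ≤ Ftot D x :=
  Finset.sum_nonneg fun k _ => mul_nonneg (rho_pos D k).le (Gk_nonneg x)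

lemma Ftot_le (D : Data K) (x : ℝ) : Ftot D x ≤ D.rhoTot :=
  Finset.sum_le_sum fun k _ => by
    have := Gk_le_one (Γ := D.Γ k) x
    nlinarith [rho_pos D k, Gk_nonneg (Γ := D.Γ k) x]

lemma rhoTot_pos (D : Data K) : 0 < D.rhoTot := lt_trans one_pos D.rho_gt_one

lemma Ftot_antitone (D : Data K) : Antitone (Ftot D) := by
  intro a b hab
  exact Finset.sum_le_sum fun k _ =>
    mul_le_mul_of_nonneg_left (Gk_antitone hab) (rho_pos D k).le

lemma Ftot_continuous (D : Data K) : Continuous (Ftot D) :=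
  continuous_finset_sum _ fun k _ => (continuous_const.mul (Gk_continuous (D.Γ_noAtom k)))

lemma Ftot_eq_zero_iff {D : Data K} {x : ℝ} :
    Ftot D x = 0 ↔ ∀ k, Gk (D.Γ k) x = 0 := by
  rw [Ftot, Finset.sum_eq_zero_iff_of_nonneg
    (fun k _ => mul_nonneg (rho_pos D k).le (Gk_nonneg x))]
  constructor
  · intro h k
    have := h k (Finset.mem_univ k)
    rcases mul_eq_zero.mp this with h' | h'
    · exact absurd h' (ne_of_gt (rho_pos D k))
    · exact h'
  · intro h k _; rw [h k, mul_zero]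

variable {w : ℝ → ℝ} (hw : IsWorkloadSol D w)

include hw

lemma hw_integrable {a b : ℝ} (ha : 0 ≤ a) (hb : 0 ≤ b) (k : Fin K) :
    IntervalIntegrable (fun s => Gk (D.Γ k) (w s)) volume a b := by
  have h := hw.2.1 k (max a b) (le_trans ha (le_max_left _ _))
  refine h.mono_set ?_
  rw [Set.uIcc_of_le (le_trans ha (le_max_left _ _))]
  exact Set.uIcc_subset_Icc ⟨ha, le_max_left _ _⟩ ⟨hb, le_max_right _ _⟩

lemma w_sub_eq {a b : ℝ} (ha : 0 ≤ a) (hab : a ≤ b) :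
    w b - w a = (∑ k, D.rho k * ∫ s in a..b, Gk (D.Γ k) (w s)) - (b - a) := by
  have hb : 0 ≤ b := le_trans ha hab
  have h1 := hw.2.2 a ha
  have h2 := hw.2.2 b hb
  have hsplit : ∀ k : Fin K, (∫ s in (0:ℝ)..b, Gk (D.Γ k) (w s))
      = (∫ s in (0:ℝ)..a, Gk (D.Γ k) (w s)) + ∫ s in a..b, Gk (D.Γ k) (w s) :=
    fun k => (intervalIntegral.integral_add_adjacent_intervals
      (hw.2.1 k a ha) (hw_integrable hw ha hb k)).symm
  have : ∑ k, D.rho k * ∫ s in (0:ℝ)..b, Gk (D.Γ k) (w s)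
      = (∑ k, D.rho k * ∫ s in (0:ℝ)..a, Gk (D.Γ k) (w s))
        + ∑ k, D.rho k * ∫ s in a..b, Gk (D.Γ k) (w s) := by
    rw [← Finset.sum_add_distrib]
    exact Finset.sum_congr rfl fun k _ => by rw [hsplit k, mul_add]
  rw [h1, h2, this]; ring

lemma w_sub_bound {a b : ℝ} (ha : 0 ≤ a) (hab : a ≤ b) :
    |w b - w a| ≤ (D.rhoTot + 1) * (b - a) := by
  rw [w_sub_eq hw ha hab]
  have habs : ∀ k : Fin K, |∫ s in a..b, Gk (D.Γ k) (w s)| ≤ b - a := by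
    intro k
    have := intervalIntegral.norm_integral_le_of_norm_le_const
      (C := 1) (f := fun s => Gk (D.Γ k) (w s)) (a := a) (b := b) ?_
    · rw [Real.norm_eq_abs] at this
      calc |∫ s in a..b, Gk (D.Γ k) (w s)| ≤ 1 * |b - a| := this
        _ = b - a := by rw [one_mul, abs_of_nonneg (by linarith)]
    · intro x _
      rw [Real.norm_eq_abs, abs_of_nonneg (Gk_nonneg _)]
      exact Gk_le_one _
  have hsum : |∑ k, D.rho k * ∫ s in a..b, Gk (D.Γ k) (w s)| ≤ D.rhoTot * (b - a) := by
    calc |∑ k, D.rho k * ∫ s in a..b, Gk (D.Γ k) (w s)|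
        ≤ ∑ k, |D.rho k * ∫ s in a..b, Gk (D.Γ k) (w s)| := Finset.abs_sum_le_sum_abs _ _
      _ ≤ ∑ k, D.rho k * (b - a) := Finset.sum_le_sum fun k _ => by
          rw [abs_mul, abs_of_nonneg (rho_pos D k).le]
          exact mul_le_mul_of_nonneg_left (habs k) (rho_pos D k).le
      _ = D.rhoTot * (b - a) := by rw [Data.rhoTot, ← Finset.sum_mul]
  calc |(∑ k, D.rho k * ∫ s in a..b, Gk (D.Γ k) (w s)) - (b - a)|
      ≤ |∑ k, D.rho k * ∫ s in a..b, Gk (D.Γ k) (w s)| + |b - a| := abs_sub _ _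
    _ ≤ D.rhoTot * (b - a) + (b - a) := by
        refine add_le_add hsum ?_; rw [abs_of_nonneg (by linarith)]
    _ = (D.rhoTot + 1) * (b - a) := by ring

lemma w_continuousOn : ContinuousOn w (Set.Ici 0) := by
  have : LipschitzOnWith (Real.toNNReal (D.rhoTot + 1)) w (Set.Ici 0) := by
    rw [lipschitzOnWith_iff_dist_le_mul]
    intro x hx y hy
    rw [Real.dist_eq, Real.dist_eq]
    rcases le_total y x with h | h
    · rw [abs_of_nonneg (by linarith : (0:ℝ) ≤ x - y)]
      calc |w x - w y| ≤ (D.rhoTot + 1) * (x - y) := w_sub_bound hw hy h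
        _ ≤ Real.toNNReal (D.rhoTot + 1) * (x - y) := by
            refine mul_le_mul_of_nonneg_right ?_ (by linarith)
            exact Real.le_coe_toNNReal _
    · rw [abs_of_nonpos (by linarith : x - y ≤ 0), abs_sub_comm, neg_sub]
      calc |w y - w x| ≤ (D.rhoTot + 1) * (y - x) := w_sub_bound hw hx h
        _ ≤ Real.toNNReal (D.rhoTot + 1) * (y - x) := by
            refine mul_le_mul_of_nonneg_right ?_ (by linarith)
            exact Real.le_coe_toNNReal _
  exact this.continuousOn

lemma w_hasDerivAt {t : ℝ} (ht : 0 < t) : HasDerivAt w (Ftot D (w t) - 1) t := by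
  set Φ : ℝ → ℝ := fun r => w 0 + (∑ k, D.rho k * ∫ s in (0:ℝ)..r, Gk (D.Γ k) (w s)) - r with hΦ
  have hcw : ContinuousAt w t :=
    (w_continuousOn hw).continuousAt (Ici_mem_nhds ht)
  have hderiv : HasDerivAt Φ (Ftot D (w t) - 1) t := by
    have hsum : HasDerivAt (fun r => ∑ k, D.rho k * ∫ s in (0:ℝ)..r, Gk (D.Γ k) (w s))
        (Ftot D (w t)) t := by
      have : HasDerivAt (fun r => ∑ k, D.rho k * ∫ s in (0:ℝ)..r, Gk (D.Γ k) (w s))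
          (∑ k, D.rho k * Gk (D.Γ k) (w t)) t := by
        apply HasDerivAt.fun_sum
        intro k _
        refine HasDerivAt.const_mul _ ?_
        refine intervalIntegral.integral_hasDerivAt_right
          (hw.2.1 k t ht.le) ?_ ?_
        · refine ⟨Set.Ioo 0 (t+1), Ioo_mem_nhds ht (by linarith), ?_⟩
          have h1 : IntegrableOn (fun s => Gk (D.Γ k) (w s)) (Set.Ioc 0 (t+1)) volume := by
            have := hw.2.1 k (t+1) (by linarith)
            rwa [intervalIntegrable_iff_integrableOn_Ioc_of_le (by linarith)] at this
          exact h1.aestronglyMeasurable.mono_measure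
            (Measure.restrict_mono (Set.Ioo_subset_Ioc_self) le_rfl)
        · exact (Gk_continuous (D.Γ_noAtom k)).continuousAt.comp hcw
      exact this
    have := (hsum.const_add (w 0)).fun_sub (hasDerivAt_id t)
    simpa [hΦ] using this
  refine hderiv.congr_of_eventuallyEq ?_
  filter_upwards [Ioi_mem_nhds ht] with r hr
  exact (hw.2.2 r (le_of_lt hr))

lemma wplus_monotoneOn : MonotoneOn (fun s => w s + s) (Set.Ici 0) := by
  refine monotoneOn_of_deriv_nonneg (convex_Ici 0)
    (by exact (w_continuousOn hw).add continuousOn_id) ?_ ?_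
  · rw [interior_Ici]
    intro x hx
    exact ((w_hasDerivAt hw hx).add (hasDerivAt_id x)).differentiableAt.differentiableWithinAt
  · rw [interior_Ici]
    intro x hx
    have h := ((w_hasDerivAt hw hx).fun_add (hasDerivAt_id x)).deriv
    simp only [id] at h
    rw [show (fun s => w s + s) = (fun s => w s + id s) from rfl]
    simp only [id]
    rw [h]
    have := Ftot_nonneg D (w x)
    linarith

end Workload
section Uniqueness

variable {K : ℕ} {D : Data K}

lemma workload_unique {w1 w2 : ℝ → ℝ} (h1 : IsWorkloadSol D w1) (h2 : IsWorkloadSol D w2)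
    (h0 : w1 0 = w2 0) {t : ℝ} (ht : 0 ≤ t) : w1 t = w2 t := by
  set h : ℝ → ℝ := fun s => (w1 s - w2 s) ^ 2 with hh
  have hanti : AntitoneOn h (Set.Ici 0) := by
    refine antitoneOn_of_deriv_nonpos (convex_Ici 0) ?_ ?_ ?_
    · exact (((w_continuousOn h1).sub (w_continuousOn h2)).pow 2)
    · rw [interior_Ici]
      intro x hx
      exact (((w_hasDerivAt h1 hx).sub (w_hasDerivAt h2 hx)).pow 2).differentiableAt.differentiableWithinAt
    · rw [interior_Ici]
      intro x hx
      have hd := (((w_hasDerivAt h1 hx).fun_sub (w_hasDerivAt h2 hx)).fun_pow 2).deriv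
      rw [hh, hd]
      norm_num at hd ⊢

      rcases le_total (w1 x) (w2 x) with hc | hc
      · have := Ftot_antitone D hc
        nlinarith
      · have := Ftot_antitone D hc
        nlinarith
  have h0' : h 0 = 0 := by rw [hh]; simp [h0]
  have hle : h t ≤ 0 := h0' ▸ hanti (Set.mem_Ici.mpr le_rfl) (Set.mem_Ici.mpr ht) ht
  have : (w1 t - w2 t) ^ 2 = 0 := le_antisymm hle (sq_nonneg _)
  have := pow_eq_zero_iff (n := 2) (by norm_num) |>.mp this
  linarith [this]

variable {w : ℝ → ℝ}

lemma no_flat (hw : IsWorkloadSol D w)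
    (hI3 : ∀ ε : ℝ, 0 < ε → ∃ k, 0 < Gk (D.Γ k) (w 0 - ε))
    {t a b c : ℝ} (ha : 0 ≤ a) (hab : a < b) (hbt : b ≤ t)
    (hflat : ∀ v ∈ Set.Icc a b, w (t - v) = c + v) : False := by
  -- Step 1: all `G_k` vanish on `(c + a, ∞)`.
  have hFzero : ∀ v ∈ Set.Ioo a b, ∀ k, Gk (D.Γ k) (c + v) = 0 := by
    intro v hv k
    have hσpos : 0 < t - v := by linarith [hv.2]
    have hd1 : HasDerivAt w (Ftot D (w (t - v)) - 1) (t - v) := w_hasDerivAt hw hσpos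
    have hd2 : HasDerivAt w (-1) (t - v) := by
      have haff : HasDerivAt (fun σ : ℝ => c + t - σ) (-1) (t - v) := by
        simpa using ((hasDerivAt_id (t - v)).const_sub (c + t))
      refine haff.congr_of_eventuallyEq ?_
      have hmem : Set.Ioo (t - b) (t - a) ∈ 𝓝 (t - v) :=
        Ioo_mem_nhds (by linarith [hv.2]) (by linarith [hv.1])
      filter_upwards [hmem] with σ hσ
      have h' : w (t - (t - σ)) = c + (t - σ) :=
        hflat (t - σ) ⟨by linarith [hσ.2], by linarith [hσ.1]⟩
      simp only [sub_sub_cancel] at h'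
      rw [h']; ring
    have := hd1.unique hd2
    have hF0 : Ftot D (w (t - v)) = 0 := by linarith
    have hwv : w (t - v) = c + v := hflat v ⟨hv.1.le, hv.2.le⟩
    rw [hwv] at hF0
    exact Ftot_eq_zero_iff.mp hF0 k
  have hGzero : ∀ x : ℝ, c + a < x → ∀ k, Gk (D.Γ k) x = 0 := by
    intro x hx k
    set v₀ : ℝ := min ((a + b) / 2) ((a + (x - c)) / 2) with hv₀
    have hv₀a : a < v₀ := by
      apply lt_min <;> [linarith; linarith]
    have hv₀b : v₀ < b := lt_of_le_of_lt (min_le_left _ _) (by linarith)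
    have hcle : c + v₀ ≤ x := by
      have : v₀ ≤ (a + (x - c)) / 2 := min_le_right _ _
      linarith
    have h0 := hFzero v₀ ⟨hv₀a, hv₀b⟩ k
    have := Gk_antitone (Γ := D.Γ k) hcle
    have := Gk_nonneg (Γ := D.Γ k) x
    linarith
  -- Step 2: `w 0 ≥ c + t` via the monotone function `g = w + id`.
  set g : ℝ → ℝ := fun σ => w σ + σ with hg
  have hgmono : MonotoneOn g (Set.Ici 0) := wplus_monotoneOn hw
  set m' : ℝ := (a + b) / 2 with hm'
  set T : ℝ := t - m' with hT
  have hT0 : 0 ≤ T := by rw [hT, hm']; linarith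
  have hgT : g T = c + t := by
    have : w (t - m') = c + m' := hflat m' ⟨by linarith, by linarith⟩
    rw [hg]; simp only [hT]; rw [this]; ring
  set S : Set ℝ := Set.Icc 0 T ∩ g ⁻¹' (Set.Ici (c + t)) with hS
  have hSclosed : IsClosed S := by
    refine ContinuousOn.preimage_isClosed_of_isClosed ?_ isClosed_Icc isClosed_Ici
    exact ((w_continuousOn hw).add continuousOn_id).mono (Set.Icc_subset_Ici_self)
  have hSne : S.Nonempty := ⟨T, ⟨⟨hT0, le_rfl⟩, by simp only [Set.mem_preimage, Set.mem_Ici, hgT]; exact le_rfl⟩⟩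
  have hSbdd : BddBelow S := ⟨0, fun σ hσ => hσ.1.1⟩
  set ℓ : ℝ := sInf S with hℓ
  have hℓS : ℓ ∈ S := hSclosed.csInf_mem hSne hSbdd
  have hℓ0 : 0 ≤ ℓ := hℓS.1.1
  have hℓT : ℓ ≤ T := hℓS.1.2
  have hgℓ : g ℓ = c + t := by
    refine le_antisymm ?_ hℓS.2
    rw [← hgT]
    exact hgmono (Set.mem_Ici.mpr hℓ0) (Set.mem_Ici.mpr hT0) hℓT
  have hℓeq0 : ℓ = 0 := by
    by_contra hne
    have hℓpos : 0 < ℓ := lt_of_le_of_ne hℓ0 (Ne.symm hne)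
    have hwℓ : w ℓ = c + t - ℓ := by
      have : w ℓ + ℓ = c + t := hgℓ
      linarith
    have hwℓgt : c + a < w ℓ := by
      rw [hwℓ]
      have : ℓ ≤ t - m' := hℓT
      rw [hm'] at this
      linarith
    have hcw : ContinuousAt w ℓ := (w_continuousOn hw).continuousAt (Ici_mem_nhds hℓpos)
    have hev : ∀ᶠ σ in 𝓝 ℓ, c + a < w σ := hcw.eventually_const_lt hwℓgt
    obtain ⟨δ₀, hδ₀pos, hδ₀⟩ := Metric.eventually_nhds_iff.mp hev
    set δ : ℝ := min (δ₀ / 2) ℓ with hδdef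
    have hδpos : 0 < δ := lt_min (by linarith) hℓpos
    have hδℓ : δ ≤ ℓ := min_le_right _ _
    have hwgt : ∀ σ ∈ Set.Icc (ℓ - δ) ℓ, c + a < w σ := by
      intro σ hσ
      refine hδ₀ ?_
      rw [Real.dist_eq, abs_lt]
      constructor
      · have := hσ.1; have : δ ≤ δ₀ / 2 := min_le_left _ _; linarith [hσ.1, (min_le_left (δ₀/2) ℓ)]
      · linarith [hσ.2, hδ₀pos]
    have hganti : AntitoneOn g (Set.Icc (ℓ - δ) ℓ) := by
      refine antitoneOn_of_deriv_nonpos (convex_Icc _ _) ?_ ?_ ?_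
      · exact ((w_continuousOn hw).add continuousOn_id).mono
          (fun σ hσ => by exact le_trans (by linarith [hσ.1]) (le_refl σ) |>.trans_eq rfl)
      · rw [interior_Icc]
        intro σ hσ
        have hσpos : 0 < σ := lt_of_le_of_lt (by linarith) hσ.1
        exact ((w_hasDerivAt hw hσpos).add (hasDerivAt_id σ)).differentiableAt.differentiableWithinAt
      · rw [interior_Icc]
        intro σ hσ
        have hσpos : 0 < σ := lt_of_le_of_lt (by linarith) hσ.1
        have hd := ((w_hasDerivAt hw hσpos).fun_add (hasDerivAt_id σ)).deriv
        simp only [id] at hd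
        rw [show g = (fun s => w s + id s) from rfl]
        simp only [id]
        rw [hd]
        have hF0 : Ftot D (w σ) = 0 := by
          rw [Ftot_eq_zero_iff]
          intro k
          exact hGzero (w σ) (hwgt σ ⟨hσ.1.le, hσ.2.le⟩) k
        rw [hF0]; linarith
    have hmemS : ℓ - δ ∈ S := by
      refine ⟨⟨by linarith, by linarith⟩, ?_⟩
      have : g ℓ ≤ g (ℓ - δ) := hganti ⟨le_rfl, by linarith⟩ ⟨by linarith, le_rfl⟩ (by linarith)
      simp only [Set.mem_preimage, Set.mem_Ici]
      rw [hgℓ] at this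
      exact this
    have := csInf_le hSbdd hmemS
    rw [← hℓ] at this
    linarith
  have hw0 : c + t ≤ w 0 := by
    have := hgℓ
    rw [hℓeq0] at this
    simp only [hg, add_zero] at this
    linarith
  -- Step 3: contradiction with (I.3).
  have hεpos : 0 < (w 0 - (c + a)) / 2 := by
    have : a < t := lt_of_lt_of_le hab hbt
    linarith
  obtain ⟨k, hk⟩ := hI3 _ hεpos
  have : c + a < w 0 - (w 0 - (c + a)) / 2 := by linarith
  have := hGzero _ this k
  linarith

end Uniqueness
section PsiTau

variable {K : ℕ} {D : Data K} {w : ℝ → ℝ}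

lemma psi_antitone (hw : IsWorkloadSol D w) {t v1 v2 : ℝ} (h1 : 0 ≤ v1) (h12 : v1 ≤ v2)
    (h2 : v2 ≤ t) : w (t - v2) - v2 ≤ w (t - v1) - v1 := by
  have := wplus_monotoneOn hw (Set.mem_Ici.mpr (by linarith : (0:ℝ) ≤ t - v2))
    (Set.mem_Ici.mpr (by linarith : (0:ℝ) ≤ t - v1)) (by linarith)
  simp only at this
  linarith

lemma psi_strictAnti (hw : IsWorkloadSol D w)
    (hI3 : ∀ ε : ℝ, 0 < ε → ∃ k, 0 < Gk (D.Γ k) (w 0 - ε))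
    {t v1 v2 : ℝ} (h1 : 0 ≤ v1) (h12 : v1 < v2) (h2 : v2 ≤ t) :
    w (t - v2) - v2 < w (t - v1) - v1 := by
  rcases lt_or_eq_of_le (psi_antitone hw h1 h12.le h2) with h | h
  · exact h
  exfalso
  set c : ℝ := w (t - v1) - v1 with hc
  refine no_flat hw hI3 (c := c) h1 h12 h2 (fun v hv => ?_)
  have hle1 : w (t - v) - v ≤ c := psi_antitone hw h1 hv.1 (le_trans hv.2 h2)
  have hle2 : c ≤ w (t - v) - v := by
    have := psi_antitone hw (le_trans h1 hv.1) hv.2 h2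
    rw [h] at this; exact this
  linarith

lemma tau_spec (hw : IsWorkloadSol D w) {t : ℝ} (hw0t : w 0 ≤ t) :
    0 ≤ tauF w t ∧ tauF w t ≤ t ∧ w (tauF w t) + tauF w t = t := by
  have ht0 : 0 ≤ t := le_trans (hw.1 0 le_rfl) hw0t
  set S : Set ℝ := {s : ℝ | 0 ≤ s ∧ s ≤ t ∧ t ≤ w s + s} with hSdef
  have hSeq : S = Set.Icc 0 t ∩ (fun s => w s + s) ⁻¹' (Set.Ici t) := by
    ext s; simp [hSdef, Set.mem_Icc, and_assoc]
  have hSclosed : IsClosed S := by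
    rw [hSeq]
    refine ContinuousOn.preimage_isClosed_of_isClosed ?_ isClosed_Icc isClosed_Ici
    exact ((w_continuousOn hw).add continuousOn_id).mono (Set.Icc_subset_Ici_self)
  have hSne : S.Nonempty := ⟨t, ⟨ht0, le_rfl, by linarith [hw.1 t ht0]⟩⟩
  have hSbdd : BddBelow S := ⟨0, fun s hs => hs.1⟩
  have hτS : tauF w t ∈ S := hSclosed.csInf_mem hSne hSbdd
  set τ : ℝ := tauF w t with hτdef
  have hτ0 : 0 ≤ τ := hτS.1
  have hτt : τ ≤ t := hτS.2.1
  have hge : t ≤ w τ + τ := hτS.2.2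
  refine ⟨hτ0, hτt, ?_⟩
  rcases eq_or_lt_of_le hτ0 with h0 | hτpos
  · rw [← h0]
    simp only [add_zero]
    rw [← h0] at hge
    simp only [add_zero] at hge
    linarith
  have hle : w τ + τ ≤ t := by
    by_contra hgt
    push_neg at hgt
    have hcw : ContinuousAt (fun s => w s + s) τ :=
      ((w_continuousOn hw).continuousAt (Ici_mem_nhds hτpos)).add continuousAt_id
    have hev : ∀ᶠ s in 𝓝 τ, t < w s + s := hcw.eventually_const_lt hgt
    obtain ⟨δ₀, hδ₀pos, hδ₀⟩ := Metric.eventually_nhds_iff.mp hev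
    set s₀ : ℝ := τ - min (δ₀ / 2) (τ / 2) with hs₀
    have hmin_pos : 0 < min (δ₀ / 2) (τ / 2) := lt_min (by linarith) (by linarith)
    have hs₀τ : s₀ < τ := by rw [hs₀]; linarith
    have hs₀0 : 0 ≤ s₀ := by
      rw [hs₀]; have := min_le_right (δ₀ / 2) (τ / 2); linarith
    have : s₀ ∈ S := by
      refine ⟨hs₀0, by linarith, ?_⟩
      refine le_of_lt (hδ₀ ?_)
      rw [Real.dist_eq, abs_lt]
      have h1 := min_le_left (δ₀ / 2) (τ / 2)
      constructor <;> [skip; skip] <;> rw [hs₀] <;> [linarith; linarith]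
    have := csInf_le hSbdd this
    rw [hSdef] at this
    change τ ≤ s₀ at this
    linarith
  linarith

end PsiTau
section MeasureSide

variable {K : ℕ}

instance dataNoAtoms (D : Data K) (k : Fin K) : MeasureTheory.NullSingletonClass (D.Γ k) :=
  ⟨D.Γ_noAtom k⟩

lemma Hset_subset_Q {m : ℝ} (hm : 0 ≤ m) :
    (Set.Icc (0:ℝ) m ×ˢ Set.Ici (0:ℝ)) ⊆ Q := fun y hy => ⟨hy.1.1, hy.2⟩

lemma shiftd_eval {m r : ℝ} (hr : 0 ≤ r) :
    shiftd (Set.Icc (0:ℝ) m ×ˢ Set.Ici (0:ℝ)) r = Set.Icc r (m + r) ×ˢ Set.Ici r := by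
  ext y
  simp only [shiftd, shift, Q, Set.mem_setOf_eq, Set.mem_prod, Set.mem_Icc, Set.mem_Ici]
  constructor
  · rintro ⟨⟨hy1, hy2⟩, ⟨⟨h1, h2⟩, h3⟩⟩
    exact ⟨⟨by linarith, by linarith⟩, by linarith⟩
  · rintro ⟨⟨h1, h2⟩, h3⟩
    exact ⟨⟨by linarith, by linarith⟩, ⟨⟨by linarith, by linarith⟩, by linarith⟩⟩

lemma kern_eval (D : Data K) (k : Fin K) {m r : ℝ} (hr : 0 ≤ r) (a : ℝ) :
    kern (D.Γ k) a (Set.Icc r (m + r) ×ˢ Set.Ici r)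
      = if 0 < a ∧ r ≤ a ∧ a ≤ m + r then Gk (D.Γ k) r else 0 := by
  classical
  rw [kern, deltaPlus]
  by_cases ha : 0 < a
  · rw [if_pos ha, Measure.dirac_prod,
      Measure.map_apply measurable_prodMk_left
        (measurableSet_Icc.prod measurableSet_Ici),
      Set.mk_preimage_prod_right_eq_if]
    by_cases hmem : a ∈ Set.Icc r (m + r)
    · rw [if_pos hmem, if_pos ⟨ha, hmem.1, hmem.2⟩]
      have : Set.Ici r =ᵐ[D.Γ k] Set.Ioi r := (MeasureTheory.Ioi_ae_eq_Ici (μ := D.Γ k) (a := r)).symm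
      rw [measure_congr this]
      rfl
    · rw [if_neg hmem, if_neg (fun h => hmem ⟨h.2.1, h.2.2⟩)]
      simp
  · rw [if_neg ha, Measure.zero_prod]
    rw [if_neg (fun h => ha h.1)]
    simp

lemma integral_indicator_Icc (f : ℝ → ℝ) {p q t : ℝ} (h0p : 0 ≤ p) (hpq : p ≤ q) (hqt : q ≤ t) :
    ∫ v in (0:ℝ)..t, (Set.Icc p q).indicator f v = ∫ v in p..q, f v := by
  have h0t : (0:ℝ) ≤ t := le_trans h0p (le_trans hpq hqt)
  rw [intervalIntegral.integral_of_le h0t, intervalIntegral.integral_of_le hpq,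
    setIntegral_indicator measurableSet_Icc]
  refine setIntegral_congr_set ?_
  have hdiff1 : (Set.Ioc 0 t ∩ Set.Icc p q) \ Set.Ioc p q ⊆ {p} := by
    intro x hx
    obtain ⟨⟨hx1, hx2⟩, hx3⟩ := hx
    simp only [Set.mem_Ioc, not_and, not_le] at hx3
    simp only [Set.mem_singleton_iff]
    rcases lt_or_ge p x with h | h
    · exact absurd (hx3 h) (not_lt.mpr hx2.2)
    · exact le_antisymm h hx2.1
  have hdiff2 : Set.Ioc p q \ (Set.Ioc 0 t ∩ Set.Icc p q) = ∅ := by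
    rw [Set.diff_eq_empty]
    intro x hx
    exact ⟨⟨lt_of_le_of_lt h0p hx.1, le_trans hx.2 hqt⟩, ⟨hx.1.le, hx.2⟩⟩
  rw [MeasureTheory.ae_eq_set]
  constructor
  · exact measure_mono_null hdiff1 (measure_singleton p)
  · rw [hdiff2]; exact measure_empty

lemma beyond_null {D : Data K} {ϑ : Fin K → MeasureTheory.Measure (ℝ × ℝ)}
    (hϑ : MemI D ϑ) (k : Fin K) {x : ℝ} (hx0 : 0 ≤ x) (hx : wMeas ϑ < x) :
    ϑ k (Set.Ici x ×ˢ Set.Ici (0:ℝ)) = 0 := by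
  by_contra h
  have hpos : 0 < ∑ j, ϑ j (Set.Ici x ×ˢ Set.Ici (0:ℝ)) := by
    refine lt_of_lt_of_le (pos_iff_ne_zero.mpr h) ?_
    exact Finset.single_le_sum (f := fun j => ϑ j (Set.Ici x ×ˢ Set.Ici (0:ℝ)))
      (fun j _ => zero_le) (Finset.mem_univ k)
  have hmem : x ∈ {y : ℝ | 0 ≤ y ∧ 0 < ∑ j, ϑ j (Set.Ici y ×ˢ Set.Ici (0:ℝ))} := ⟨hx0, hpos⟩
  have := le_csSup hϑ.2.2.2.1 hmem
  rw [wMeas] at hx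
  linarith

lemma theta_H_null {D : Data K} {ϑ : Fin K → MeasureTheory.Measure (ℝ × ℝ)}
    (hϑ : MemI D ϑ) (k : Fin K) {t m : ℝ} (ht : 0 ≤ t) (htw : wMeas ϑ ≤ t) :
    ϑ k (Set.Icc t (m + t) ×ˢ Set.Ici t) = 0 := by
  have hsub : Set.Icc t (m + t) ×ˢ Set.Ici t ⊆
      ({t} ×ˢ Set.Ici (0:ℝ)) ∪ ⋃ n : ℕ, Set.Ici (t + (n+1:ℝ)⁻¹) ×ˢ Set.Ici (0:ℝ) := by
    rintro ⟨y1, y2⟩ ⟨⟨h1, h2⟩, h3⟩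
    simp only [Set.mem_Icc] at h1 h2
    simp only [Set.mem_Ici] at h3
    simp only [Set.mem_union, Set.mem_prod, Set.mem_singleton_iff, Set.mem_Ici, Set.mem_iUnion]
    rcases eq_or_lt_of_le h1 with heq | hlt
    · exact Or.inl ⟨heq.symm, by linarith⟩
    · obtain ⟨n, hn⟩ := exists_nat_one_div_lt (show (0:ℝ) < y1 - t by linarith)
      rw [one_div] at hn
      exact Or.inr ⟨n, by linarith, by linarith⟩
  refine measure_mono_null hsub (measure_union_null ?_ ?_)
  · -- vertical line
    have hline := hϑ.2.2.1 (t, 0) ⟨ht, le_rfl⟩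
    have hsub' : ({t} ×ˢ Set.Ici (0:ℝ)) ⊆ shift Cset (t, 0) := by
      rintro ⟨y1, y2⟩ ⟨h1, h2⟩
      simp only [Set.mem_singleton_iff] at h1
      subst h1
      exact ⟨⟨ht, h2⟩, Or.inr ⟨by simp, by simpa using h2⟩⟩
    have : ϑ k (shift Cset (t, 0)) = 0 := by
      have hle : ϑ k (shift Cset (t, 0)) ≤ ∑ j, ϑ j (shift Cset (t, 0)) :=
        Finset.single_le_sum (f := fun j => ϑ j (shift Cset (t, 0)))
          (fun j _ => zero_le) (Finset.mem_univ k)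
      rw [hline] at hle
      exact le_antisymm hle zero_le
    exact measure_mono_null hsub' this
  · rw [measure_iUnion_null_iff]
    intro n
    refine beyond_null hϑ k (by positivity) ?_
    have : (0:ℝ) < (n+1:ℝ)⁻¹ := by positivity
    linarith

end MeasureSide

/-- Fluid age formula: with `H(t,u) = [0, max(w(t−u)−u, 0)] × [0,∞)`,
for each `k`: if `0 ≤ u ≤ t < w(0)`, then
`ζ_k(t)(H(t,u)) = ϑ_k(H(t,u)_t) + λ_k ∫_u^t G_k(v) dv`; if `t ≥ w(0)` and `0 ≤ u ≤ t`,
then `ζ_k(t)(H(t,u)) = λ_k ∫_u^{w(τ(t))} G_k(v) dv` when `u < w(τ(t))`, and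
`ζ_k(t)(H(t,u)) = 0` when `w(τ(t)) ≤ u`. -/
theorem fluid_age_formula {K : ℕ} (D : Data K)
    (ϑ : Fin K → MeasureTheory.Measure (ℝ × ℝ)) (hϑ : MemI D ϑ)
    (ζ : ℝ → Fin K → MeasureTheory.Measure (ℝ × ℝ)) (hζ : IsFluidSol D ϑ ζ)
    (w : ℝ → ℝ) (hw : IsWorkloadSol D w) (hw0 : w 0 = wMeas ϑ) :
    ∀ k,
      (∀ t u : ℝ, 0 ≤ u → u ≤ t → t < w 0 →
        ζ t k (Set.Icc (0:ℝ) (max (w (t - u) - u) 0) ×ˢ Set.Ici (0:ℝ)) =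
          ϑ k (shiftd (Set.Icc (0:ℝ) (max (w (t - u) - u) 0) ×ˢ Set.Ici (0:ℝ)) t) +
            ENNReal.ofReal (D.lam k * ∫ v in u..t, Gk (D.Γ k) v)) ∧
      (∀ t u : ℝ, w 0 ≤ t → 0 ≤ u → u ≤ t →
        (u < w (tauF w t) →
          ζ t k (Set.Icc (0:ℝ) (max (w (t - u) - u) 0) ×ˢ Set.Ici (0:ℝ)) =
            ENNReal.ofReal (D.lam k * ∫ v in u..(w (tauF w t)), Gk (D.Γ k) v)) ∧
        (w (tauF w t) ≤ u →
          ζ t k (Set.Icc (0:ℝ) (max (w (t - u) - u) 0) ×ˢ Set.Ici (0:ℝ)) = 0)) := by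

  obtain ⟨w₂, hw₂, hw₂0, hfin, hζ0, hform⟩ := hζ
  have hagree : ∀ s : ℝ, 0 ≤ s → w₂ s = w s := fun s hs =>
    workload_unique hw₂ hw (by rw [hw₂0, hw0]) hs
  have hI3 : ∀ ε : ℝ, 0 < ε → ∃ j, 0 < Gk (D.Γ j) (w 0 - ε) := by
    intro ε hε; rw [hw0]; exact hϑ.2.2.2.2 ε hε
  intro k
  -- the master formula
  have master : ∀ t u : ℝ, 0 ≤ u → u ≤ t →
      ζ t k (Set.Icc (0:ℝ) (max (w (t - u) - u) 0) ×ˢ Set.Ici (0:ℝ)) =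
        ϑ k (shiftd (Set.Icc (0:ℝ) (max (w (t - u) - u) 0) ×ˢ Set.Ici (0:ℝ)) t) +
          ENNReal.ofReal (D.lam k * ∫ v in (0:ℝ)..t,
            (if 0 < w (t - v) ∧ v ≤ w (t - v) ∧ w (t - v) ≤ max (w (t - u) - u) 0 + v
             then Gk (D.Γ k) v else 0)) := by
    intro t u h0u hut
    have h0t : (0:ℝ) ≤ t := le_trans h0u hut
    set m : ℝ := max (w (t - u) - u) 0 with hm
    have hm0 : 0 ≤ m := le_max_right _ _
    set B : Set (ℝ × ℝ) := Set.Icc (0:ℝ) m ×ˢ Set.Ici (0:ℝ) with hB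
    obtain ⟨hint, heq⟩ := hform k B (Hset_subset_Q hm0)
      (measurableSet_Icc.prod measurableSet_Ici) t h0t
    set f : ℝ → ℝ := fun v =>
      if 0 < w (t - v) ∧ v ≤ w (t - v) ∧ w (t - v) ≤ m + v then Gk (D.Γ k) v else 0 with hf
    have hEqOn : Set.EqOn (fun s => kern (D.Γ k) (w₂ s) (shiftd B (t - s)))
        (fun s => f (t - s)) (Set.uIcc 0 t) := by
      intro s hs
      rw [Set.uIcc_of_le h0t] at hs
      have hrs : 0 ≤ t - s := by linarith [hs.2]
      simp only []
      rw [hB, shiftd_eval hrs, kern_eval D k hrs, hagree s hs.1, hf]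
      simp only [sub_sub_cancel]
    have hIeq : (∫ s in (0:ℝ)..t, kern (D.Γ k) (w₂ s) (shiftd B (t - s)))
        = ∫ v in (0:ℝ)..t, f v := by
      rw [intervalIntegral.integral_congr hEqOn, intervalIntegral.integral_comp_sub_left f t]
      norm_num
    rw [heq, hIeq]
  constructor
  · -- Case 1 : t < w 0
    intro t u h0u hut htw
    have h0t : (0:ℝ) ≤ t := le_trans h0u hut
    have hkey := master t u h0u hut
    have hψt : 0 < w 0 - t := by linarith
    have hψu0 : w 0 - t ≤ w (t - u) - u := by
      have := psi_antitone hw (t := t) h0u hut le_rfl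
      rw [sub_self] at this
      linarith
    have hmu : max (w (t - u) - u) 0 = w (t - u) - u := max_eq_left (by linarith)
    have hfeq : Set.EqOn
        (fun v => if 0 < w (t - v) ∧ v ≤ w (t - v) ∧ w (t - v) ≤ max (w (t - u) - u) 0 + v
          then Gk (D.Γ k) v else 0)
        ((Set.Icc u t).indicator (Gk (D.Γ k))) (Set.uIcc 0 t) := by
      intro v hv
      rw [Set.uIcc_of_le h0t] at hv
      dsimp only
      by_cases hvm : v ∈ Set.Icc u t
      · rw [Set.indicator_of_mem hvm]
        have hψv : w 0 - t ≤ w (t - v) - v := by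
          have := psi_antitone hw (t := t) hv.1 hv.2 le_rfl
          rw [sub_self] at this
          linarith
        have hψvu : w (t - v) - v ≤ w (t - u) - u :=
          psi_antitone hw (t := t) h0u hvm.1 hv.2
        rw [if_pos ⟨by linarith [hv.1], by linarith, by rw [hmu]; linarith⟩]
      · rw [Set.indicator_of_notMem hvm]
        rw [Set.mem_Icc, not_and_or] at hvm
        have hvu : v < u := by
          rcases hvm with h | h
          · exact lt_of_not_ge h
          · exact absurd hv.2 h
        have hstrict : w (t - u) - u < w (t - v) - v :=
          psi_strictAnti hw hI3 hv.1 hvu hut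
        rw [if_neg]
        rintro ⟨-, -, h3⟩
        rw [hmu] at h3
        linarith
    rw [hkey, intervalIntegral.integral_congr hfeq,
      integral_indicator_Icc _ h0u hut le_rfl]
  · -- Case 2 : w 0 ≤ t
    intro t u hwt h0u hut
    have h0t : (0:ℝ) ≤ t := le_trans h0u hut
    obtain ⟨hτ0, hτt, hτeq⟩ := tau_spec hw hwt
    set τ : ℝ := tauF w t with hτdef
    set v' : ℝ := w τ with hv'
    have hv'0 : 0 ≤ v' := hw.1 τ hτ0
    have hv't : v' ≤ t := by rw [hv']; linarith
    have htv' : t - v' = τ := by rw [hv']; linarith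
    have hψv' : w (t - v') - v' = 0 := by rw [htv', ← hv']; ring
    have hϑ0 : ϑ k (shiftd (Set.Icc (0:ℝ) (max (w (t - u) - u) 0) ×ˢ Set.Ici (0:ℝ)) t) = 0 := by
      rw [shiftd_eval h0t]
      exact theta_H_null hϑ k h0t (by rw [← hw0]; exact hwt)
    have hkey := master t u h0u hut
    rw [hϑ0, zero_add] at hkey
    constructor
    · -- u < w τ
      intro huv
      have huv' : u < v' := huv
      have hψu0 : 0 ≤ w (t - u) - u := by
        have := psi_antitone hw (t := t) h0u huv'.le hv't
        rw [hψv'] at this  -- careful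
        linarith
      have hmu : max (w (t - u) - u) 0 = w (t - u) - u := max_eq_left hψu0
      have hfeq : ∀ᵐ v ∂(volume : Measure ℝ), v ∈ Set.uIoc (0:ℝ) t →
          (if 0 < w (t - v) ∧ v ≤ w (t - v) ∧ w (t - v) ≤ max (w (t - u) - u) 0 + v
            then Gk (D.Γ k) v else 0)
          = (Set.Icc u v').indicator (Gk (D.Γ k)) v := by
        refine MeasureTheory.ae_of_all _ (fun v hv => ?_)
        rw [Set.uIoc_of_le h0t] at hv
        by_cases hvm : v ∈ Set.Icc u v'
        · rw [Set.indicator_of_mem hvm]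
          have hψv : 0 ≤ w (t - v) - v := by
            have := psi_antitone hw (t := t) (le_trans h0u hvm.1) hvm.2 hv't
            rw [hψv'] at this
            linarith
          have hψvu : w (t - v) - v ≤ w (t - u) - u :=
            psi_antitone hw (t := t) h0u hvm.1 hv.2
          rw [if_pos ⟨by linarith [hv.1], by linarith, by rw [hmu]; linarith⟩]
        · rw [Set.indicator_of_notMem hvm]
          rw [Set.mem_Icc, not_and_or] at hvm
          rcases hvm with h | h
          · have hvu : v < u := lt_of_not_ge h
            have hstrict : w (t - u) - u < w (t - v) - v :=
              psi_strictAnti hw hI3 hv.1.le hvu hut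
            rw [if_neg]
            rintro ⟨-, -, h3⟩
            rw [hmu] at h3
            linarith
          · have hvv' : v' < v := lt_of_not_ge h
            have hstrict : w (t - v) - v < w (t - v') - v' :=
              psi_strictAnti hw hI3 hv'0 hvv' hv.2
            rw [hψv'] at hstrict
            rw [if_neg]
            rintro ⟨-, h2, -⟩
            linarith
      rw [hkey, intervalIntegral.integral_congr_ae hfeq,
        integral_indicator_Icc _ h0u huv'.le hv't]
    · -- w τ ≤ u
      intro hvu
      have hψu0 : w (t - u) - u ≤ 0 := by
        have := psi_antitone hw (t := t) hv'0 hvu hut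
        rw [hψv'] at this
        linarith
      have hmu : max (w (t - u) - u) 0 = 0 := max_eq_right hψu0
      have hfeq : ∀ᵐ v ∂(volume : Measure ℝ), v ∈ Set.uIoc (0:ℝ) t →
          (if 0 < w (t - v) ∧ v ≤ w (t - v) ∧ w (t - v) ≤ max (w (t - u) - u) 0 + v
            then Gk (D.Γ k) v else 0) = (0:ℝ) := by
        have hne : ∀ᵐ v ∂(volume : Measure ℝ), v ≠ v' := by
          rw [MeasureTheory.ae_iff]
          have : {v : ℝ | ¬ v ≠ v'} = {v'} := by ext x; simp [not_not]
          rw [this]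
          exact measure_singleton v'
        filter_upwards [hne] with v hvne hv
        rw [Set.uIoc_of_le h0t] at hv
        rcases lt_or_ge v v' with hcase | hcase
        · have hstrict : w (t - v') - v' < w (t - v) - v :=
            psi_strictAnti hw hI3 hv.1.le hcase hv't
          rw [hψv'] at hstrict
          rw [if_neg]
          rintro ⟨-, -, h3⟩
          rw [hmu] at h3
          linarith
        · have hcase' : v' < v := lt_of_le_of_ne hcase (Ne.symm hvne)
          have hstrict : w (t - v) - v < w (t - v') - v' :=
            psi_strictAnti hw hI3 hv'0 hcase' hv.2
          rw [hψv'] at hstrict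
          rw [if_neg]
          rintro ⟨-, h2, -⟩
          linarith
      rw [hkey, intervalIntegral.integral_congr_ae hfeq]
      simp

end OverloadedFIFO
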